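/- Let v_1, v_2, …, v_p ∈ ℝ[a] be polynomials in one variable that are linearly independent over ℝ and whose constant terms are all zero. Then the p polynomials u_1, …, u_p ∈ ℝ[a_1, a_2, …, a_p] defined by u_i(a_1,…,a_p) = (1/p)·(v_i(a_1) + v_i(a_2) + ⋯ + v_i(a_p)) are algebraically independent over ℝ. -/

import Mathlib

open MvPolynomial

lemma aux_pderiv_polyAeval {n : ℕ} (q : Polynomial ℝ) (j k : Fin n) :
    pderiv k (Polynomial.aeval (X j : MvPolynomial (Fin n) ℝ) q)
      = if k = j then Polynomial.aeval (X j : MvPolynomial (Fin n) ℝ) (Polynomial.derivative q)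
        else 0 := by
  induction q using Polynomial.induction_on' with
  | add a b ha hb =>
    simp only [map_add, ha, hb]
    split <;> simp
  | monomial m a =>
    rw [Polynomial.aeval_monomial, Polynomial.derivative_monomial, Polynomial.aeval_monomial,
      algebraMap_eq, pderiv_C_mul, pderiv_pow]
    by_cases hkj : k = j
    · subst hkj
      rw [if_pos rfl, pderiv_X_self]
      rw [map_mul]
      rw [map_natCast C]
      ring
    · rw [if_neg hkj, pderiv_X_of_ne (Ne.symm hkj)]
      ring

lemma aux_chain {n : ℕ} (u : Fin n → MvPolynomial (Fin n) ℝ) (F : MvPolynomial (Fin n) ℝ)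
    (j : Fin n) :
    pderiv j (aeval u F) = ∑ i, aeval u (pderiv i F) * pderiv j (u i) := by
  induction F using MvPolynomial.induction_on with
  | C a => simp only [aeval_C, pderiv_C, map_zero, zero_mul, Finset.sum_const_zero]; simp
  | add f g hf hg =>
    simp only [map_add, hf, hg, add_mul, Finset.sum_add_distrib]
  | mul_X f k hf =>
    simp only [map_mul, aeval_X, pderiv_mul, hf, map_add, add_mul, Finset.sum_add_distrib]
    congr 1
    · rw [Finset.sum_mul]
      exact Finset.sum_congr rfl fun i _ => by ring
    · rw [Finset.sum_eq_single k]
      · simp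
      · intro i _ hik
        rw [pderiv_X_of_ne (Ne.symm hik)]
        simp
      · simp

lemma aux_pts : ∀ (n : ℕ) (f : Fin n → Polynomial ℝ), LinearIndependent ℝ f →
    ∃ t : Fin n → ℝ, (Matrix.of fun i j => (f i).eval (t j)).det ≠ 0 := by
  intro n
  induction n with
  | zero =>
    intro f _
    exact ⟨fun j => 0, by simp [Matrix.det_fin_zero]⟩
  | succ m ih =>
    intro f hf
    obtain ⟨t, ht⟩ := ih (fun i => f i.succ) (hf.comp Fin.succ (Fin.succ_injective m))
    -- the polynomial P(s) = det of the matrix with extra point s in column 0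
    set P : Polynomial ℝ := ∑ i : Fin (m + 1),
      Polynomial.C ((-1) ^ (i : ℕ) *
        (Matrix.of fun a b : Fin m => (f (i.succAbove a)).eval (t b)).det) * f i with hP
    have hP0 : P ≠ 0 := by
      intro h0
      have := linearIndependent_iff'.mp hf Finset.univ
        (fun i => (-1) ^ (i : ℕ) *
          (Matrix.of fun a b : Fin m => (f (i.succAbove a)).eval (t b)).det)
        (by
          rw [← h0, hP]
          exact Finset.sum_congr rfl fun i _ => by rw [Polynomial.smul_eq_C_mul])
        0 (Finset.mem_univ _)
      apply ht
      simp only [Fin.val_zero, pow_zero, one_mul] at this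
      rw [show (Matrix.of fun i j => (f i.succ).eval (t j)) =
        Matrix.of fun a b : Fin m => (f ((0 : Fin (m+1)).succAbove a)).eval (t b) by
          ext a b; simp [Fin.succAbove]]
      exact this
    obtain ⟨s, hs⟩ : ∃ s : ℝ, P.eval s ≠ 0 := by
      by_contra h
      push_neg at h
      exact hP0 (Polynomial.funext fun x => by simp [h x])
    refine ⟨Fin.cases s t, ?_⟩
    rw [Matrix.det_succ_column_zero]
    have : ∀ i : Fin (m+1),
        (Matrix.of fun i j => (f i).eval (Fin.cases s t j)).submatrix i.succAbove Fin.succ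
          = Matrix.of fun a b : Fin m => (f (i.succAbove a)).eval (t b) := by
      intro i; ext a b; simp [Matrix.submatrix]
    intro h0
    apply hs
    rw [hP]
    simp only [Polynomial.eval_finset_sum, Polynomial.eval_mul, Polynomial.eval_C]
    rw [← h0]
    refine Finset.sum_congr rfl fun i _ => ?_
    rw [this i]
    simp [mul_comm, mul_assoc, mul_left_comm]

lemma aux_detX {n : ℕ} (f : Fin n → Polynomial ℝ) (h : LinearIndependent ℝ f) :
    (Matrix.of fun i j => Polynomial.aeval (X j : MvPolynomial (Fin n) ℝ) (f i)).det ≠ 0 := by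
  obtain ⟨t, ht⟩ := aux_pts n f h
  intro h0
  apply ht
  have := congrArg (MvPolynomial.eval t) h0
  rw [map_zero, RingHom.map_det] at this
  rw [← this]
  congr 1
  ext i j
  simp only [RingHom.mapMatrix_apply, Matrix.map_apply, Matrix.of_apply]
  rw [Polynomial.aeval_def, Polynomial.hom_eval₂]
  simp [Polynomial.eval₂_eq_eval_map]
  rw [show ((MvPolynomial.eval t).comp (C : ℝ →+* MvPolynomial (Fin n) ℝ)) = RingHom.id ℝ from by
    ext r; simp, Polynomial.map_id]

lemma aux_coeff_pderiv {n : ℕ} (i : Fin n) (m : Fin n →₀ ℕ) (F : MvPolynomial (Fin n) ℝ) :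
    coeff m (pderiv i F) = ((m i : ℝ) + 1) * coeff (m + Finsupp.single i 1) F := by
  induction F using MvPolynomial.induction_on' with
  | add f g hf hg => simp [hf, hg]; ring
  | monomial s a =>
    rw [pderiv_monomial, coeff_monomial, coeff_monomial]
    by_cases hs : s = m + Finsupp.single i 1
    · subst hs
      have h1 : (m + Finsupp.single i 1) - Finsupp.single i 1 = m := by
        ext x; by_cases hx : x = i <;> simp [hx]
      have h2 : ((m + Finsupp.single i 1 : Fin n →₀ ℕ)) i = m i + 1 := by simp
      rw [if_pos h1, if_pos rfl, h2]
      push_cast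
      ring
    · rw [if_neg hs]
      by_cases h1 : s - Finsupp.single i 1 = m
      · rw [if_pos h1]
        have hsi : s i = 0 := by
          by_contra hsi
          apply hs
          have : Finsupp.single i 1 ≤ s := by
            rw [Finsupp.single_le_iff]
            omega
          rw [← h1, tsub_add_cancel_of_le this]
        simp [hsi]
      · rw [if_neg h1, mul_zero]

lemma aux_const {n : ℕ} (F : MvPolynomial (Fin n) ℝ) (h : ∀ i, pderiv i F = 0) :
    F = C (coeff 0 F) := by
  ext m
  by_cases hm : m = 0
  · subst hm; simp
  · rw [coeff_C, if_neg (Ne.symm hm)]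
    obtain ⟨i, hi⟩ : ∃ i, m i ≠ 0 := by
      by_contra hc
      push_neg at hc
      exact hm (Finsupp.ext hc)
    have hle : Finsupp.single i 1 ≤ m := by
      rw [Finsupp.single_le_iff]; omega
    have := aux_coeff_pderiv i (m - Finsupp.single i 1) F
    rw [h i, tsub_add_cancel_of_le hle] at this
    have hne : (((m - Finsupp.single i 1 : Fin n →₀ ℕ)) i : ℝ) + 1 ≠ 0 := by
      positivity
    have h0 : (0 : MvPolynomial (Fin n) ℝ).coeff (m - Finsupp.single i 1) = 0 := by simp
    rw [h0] at this
    exact (mul_eq_zero.mp this.symm).resolve_left hne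

lemma aux_deg {n : ℕ} (F : MvPolynomial (Fin n) ℝ) (i : Fin n) (h : pderiv i F ≠ 0) :
    (pderiv i F).totalDegree < F.totalDegree := by
  have key : ∀ m : Fin n →₀ ℕ, m ∈ (pderiv i F).support →
      (m.sum fun _ e => e) + 1 ≤ F.totalDegree := by
    intro m hm
    rw [mem_support_iff, aux_coeff_pderiv] at hm
    have hmem : (m + Finsupp.single i 1) ∈ F.support := by
      rw [mem_support_iff]
      intro hc
      rw [hc, mul_zero] at hm
      exact hm rfl
    have := le_totalDegree hmem
    rw [Finsupp.sum_add_index' (fun _ => rfl) (fun _ _ _ => rfl),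
      Finsupp.sum_single_index rfl] at this
    exact this
  have hpos : 0 < F.totalDegree := by
    obtain ⟨m, hm⟩ := (MvPolynomial.support_nonempty (p := pderiv i F)).mpr h
    have := key m hm
    omega
  rw [totalDegree]
  rw [Finset.sup_lt_iff (by exact hpos)]
  intro m hm
  have := key m hm
  omega

/-- **Linear independence to algebraic independence.** -/
theorem stmt_6 (p : ℕ) (hp : 0 < p) (v : Fin p → Polynomial ℝ)
    (hli : LinearIndependent ℝ v) (hconst : ∀ i, (v i).coeff 0 = 0) :
    AlgebraicIndependent ℝ (fun i : Fin p =>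
      (p : ℝ)⁻¹ • ∑ j : Fin p, Polynomial.aeval (X j : MvPolynomial (Fin p) ℝ) (v i)) := by
  rw [algebraicIndependent_iff]
  set u : Fin p → MvPolynomial (Fin p) ℝ :=
    fun i => (p : ℝ)⁻¹ • ∑ j : Fin p, Polynomial.aeval (X j : MvPolynomial (Fin p) ℝ) (v i)
    with hu
  have hpinv : ((p : ℝ))⁻¹ ≠ 0 := by
    apply inv_ne_zero
    exact_mod_cast hp.ne'
  -- linear independence of the derivatives
  have hder : LinearIndependent ℝ (fun i => Polynomial.derivative (v i)) := by
    have hspan : Submodule.span ℝ (Set.range v) ≤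
        LinearMap.ker (Polynomial.lcoeff ℝ 0) := by
      rw [Submodule.span_le]
      rintro _ ⟨i, rfl⟩
      simp [LinearMap.mem_ker, hconst i]
    have hd : Disjoint (Submodule.span ℝ (Set.range v))
        (LinearMap.ker (Polynomial.derivative : Polynomial ℝ →ₗ[ℝ] Polynomial ℝ)) := by
      rw [Submodule.disjoint_def]
      intro q hq hker
      have hc0 : q.coeff 0 = 0 := hspan hq
      have hdq : Polynomial.derivative q = 0 := LinearMap.mem_ker.mp hker
      rw [Polynomial.eq_C_of_derivative_eq_zero hdq, hc0, map_zero]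
    have := hli.map (f := (Polynomial.derivative : Polynomial ℝ →ₗ[ℝ] Polynomial ℝ)) hd
    exact this
  -- partial derivatives of the u's
  have hpu : ∀ i j, pderiv j (u i)
      = C ((p : ℝ)⁻¹) * Polynomial.aeval (X j : MvPolynomial (Fin p) ℝ)
          (Polynomial.derivative (v i)) := by
    intro i j
    rw [hu]
    dsimp only
    rw [smul_eq_C_mul, pderiv_C_mul, map_sum (pderiv j) _ _]
    congr 1
    rw [Finset.sum_congr rfl (fun k _ => by
      exact aux_pderiv_polyAeval (v i) k j)]
    simp
  suffices H : ∀ (d : ℕ) (F : MvPolynomial (Fin p) ℝ), F.totalDegree ≤ d →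
      aeval u F = 0 → F = 0 from fun F hF => H F.totalDegree F le_rfl hF
  intro d
  induction d using Nat.strong_induction_on with
  | _ d IH =>
  intro F hFd hF
  -- key vanishing identity
  have hkey : ∀ j, ∑ i, (aeval u (pderiv i F)) *
      Polynomial.aeval (X j : MvPolynomial (Fin p) ℝ) (Polynomial.derivative (v i)) = 0 := by
    intro j
    have h0 : pderiv j (aeval u F) = 0 := by rw [hF, map_zero]
    rw [aux_chain] at h0
    simp only [hpu, mul_left_comm] at h0
    rw [← Finset.mul_sum] at h0
    rcases mul_eq_zero.mp h0 with h | h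
    · exact absurd (C_eq_zero.mp h) hpinv
    · exact h
  -- matrix argument : all w i vanish
  have hw : ∀ i, aeval u (pderiv i F) = 0 := by
    set M : Matrix (Fin p) (Fin p) (MvPolynomial (Fin p) ℝ) :=
      Matrix.of fun i j => Polynomial.aeval (X j : MvPolynomial (Fin p) ℝ)
        (Polynomial.derivative (v i)) with hM
    have hdet : M.det ≠ 0 := aux_detX _ hder
    set w : Fin p → MvPolynomial (Fin p) ℝ := fun i => aeval u (pderiv i F) with hw'
    have hvm : Matrix.vecMul w M = 0 := by
      funext j
      simpa [Matrix.vecMul, dotProduct, hM, hw'] using hkey j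
    have h2 : Matrix.vecMul w (M * M.adjugate) = 0 := by
      rw [← Matrix.vecMul_vecMul, hvm, Matrix.zero_vecMul]
    rw [Matrix.mul_adjugate] at h2
    intro i
    have h3 := congrFun h2 i
    simp only [Matrix.vecMul, dotProduct, Matrix.smul_apply, Matrix.one_apply,
      smul_eq_mul, mul_ite, mul_one, mul_zero, Finset.sum_ite_eq', Finset.mem_univ,
      if_true, Pi.zero_apply] at h3
    rcases mul_eq_zero.mp h3 with h | h
    · exact h
    · exact absurd h hdet
  -- all partial derivatives of F vanish
  have hpd : ∀ i, pderiv i F = 0 := by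
    intro i
    by_contra hne
    exact hne (IH (pderiv i F).totalDegree (lt_of_lt_of_le (aux_deg F i hne) hFd) _ le_rfl (hw i))
  -- hence F is a constant, and the constant is zero
  have hC := aux_const F hpd
  rw [hC] at hF ⊢
  rw [aeval_C, MvPolynomial.algebraMap_eq] at hF
  exact hF
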